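/- Let K and L be regular languages with state complexities m and n. Then the state complexity of Kᴿ \ Lᴿ is at most (2ᵐ − 1)(2ⁿ − 1) + 1. -/
import Mathlib


namespace SCPaper

/-- Reversal of a language. -/
def rev {α : Type} (L : Language α) : Language α := {w | w.reverse ∈ L}

/-- Union of two languages. -/
def lunion {α : Type} (K L : Language α) : Language α := {w | w ∈ K ∨ w ∈ L}

/-- Intersection of two languages. -/
def linter {α : Type} (K L : Language α) : Language α := {w | w ∈ K ∧ w ∈ L}

/-- Difference of two languages. -/
def ldiff {α : Type} (K L : Language α) : Language α := {w | w ∈ K ∧ w ∉ L}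

/-- Symmetric difference of two languages. -/
def lsymm {α : Type} (K L : Language α) : Language α := lunion (ldiff K L) (ldiff L K)

/-- Sizes (numbers of states) of complete DFAs recognizing `L`. -/
def complexitySet {α : Type} (L : Language α) : Set ℕ :=
  {n | ∃ M : DFA α (Fin n), M.accepts = L}

/-- A language is regular if it is recognized by some finite DFA. -/
def Regular {α : Type} (L : Language α) : Prop := (complexitySet L).Nonempty

/-- State complexity: the number of states of a minimal DFA for `L`. -/
noncomputable def sc {α : Type} (L : Language α) : ℕ := sInf (complexitySet L)

/-- The cyclic permutation (0,1,…,n−1). -/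
def cyc (n : ℕ) (i : Fin n) : Fin n :=
  ⟨(i.val + 1) % n, Nat.mod_lt _ (Nat.lt_of_le_of_lt (Nat.zero_le _) i.isLt)⟩

/-- The transposition (0,1). -/
def tp01 (n : ℕ) (i : Fin n) : Fin n :=
  if i.val = 0 then ⟨1 % n, Nat.mod_lt _ (Nat.lt_of_le_of_lt (Nat.zero_le _) i.isLt)⟩
  else if i.val = 1 then ⟨0, Nat.lt_of_le_of_lt (Nat.zero_le _) i.isLt⟩
  else i

/-- The singular map sending n−1 to 0 and fixing everything else. -/
def sing (n : ℕ) (i : Fin n) : Fin n :=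
  if i.val = n - 1 then ⟨0, Nat.lt_of_le_of_lt (Nat.zero_le _) i.isLt⟩ else i

/-- The transposition (n−2, n−1). -/
def tpTop (n : ℕ) (i : Fin n) : Fin n :=
  if i.val = n - 1 then ⟨n - 2, by have := i.isLt; omega⟩
  else if i.val = n - 2 then ⟨n - 1, by have := i.isLt; omega⟩
  else i

/-- The singular map sending n−1 to n−2 and fixing everything else. -/
def singTop (n : ℕ) (i : Fin n) : Fin n :=
  if i.val = n - 1 then ⟨n - 2, by have := i.isLt; omega⟩ else i

/-- 𝒰ₙ(a,b,∅): binary alphabet, a = cycle (0,…,n−1), b = transposition (0,1),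
initial state 0, final state n−1. -/
def U2dfa (n : ℕ) (h : 0 < n) : DFA (Fin 2) (Fin n) where
  step := fun i x => if x = 0 then cyc n i else tp01 n i
  start := ⟨0, h⟩
  accept := {i | i.val = n - 1}

def U2 (n : ℕ) (h : 0 < n) : Language (Fin 2) := (U2dfa n h).accepts

/-- 𝒰ₙ(a,b,c): a = cycle, b = transposition (0,1), c = (n−1 ↦ 0). -/
def Udfa (n : ℕ) (h : 0 < n) : DFA (Fin 3) (Fin n) where
  step := fun i x => if x = 0 then cyc n i else if x = 1 then tp01 n i else sing n i
  start := ⟨0, h⟩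
  accept := {i | i.val = n - 1}

def U (n : ℕ) (h : 0 < n) : Language (Fin 3) := (Udfa n h).accepts

/-- 𝒰ₙ(a,b,c) with final state set {0}. -/
def U0dfa (n : ℕ) (h : 0 < n) : DFA (Fin 3) (Fin n) where
  step := fun i x => if x = 0 then cyc n i else if x = 1 then tp01 n i else sing n i
  start := ⟨0, h⟩
  accept := {i | i.val = 0}

def U0 (n : ℕ) (h : 0 < n) : Language (Fin 3) := (U0dfa n h).accepts

/-- 𝒰ₙ(a,b,c,d): a = cycle, b = transposition (0,1), c = (n−1 ↦ 0), d = identity. -/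
def U4dfa (n : ℕ) (h : 0 < n) : DFA (Fin 4) (Fin n) where
  step := fun i x =>
    if x = 0 then cyc n i else if x = 1 then tp01 n i else if x = 2 then sing n i else i
  start := ⟨0, h⟩
  accept := {i | i.val = n - 1}

def U4 (n : ℕ) (h : 0 < n) : Language (Fin 4) := (U4dfa n h).accepts

/-- 𝒰ₙ(d,c,b,a): d = cycle, c = transposition (0,1), b = (n−1 ↦ 0), a = identity. -/
def U4dcbaDfa (n : ℕ) (h : 0 < n) : DFA (Fin 4) (Fin n) where
  step := fun i x =>
    if x = 3 then cyc n i else if x = 2 then tp01 n i else if x = 1 then sing n i else i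
  start := ⟨0, h⟩
  accept := {i | i.val = n - 1}

def U4dcba (n : ℕ) (h : 0 < n) : Language (Fin 4) := (U4dcbaDfa n h).accepts

/-- 𝒱ₙ(a,b,c,d): a = cycle, b = transposition (n−2,n−1), c = (n−1 ↦ n−2), d = identity. -/
def Vdfa (n : ℕ) (h : 0 < n) : DFA (Fin 4) (Fin n) where
  step := fun i x =>
    if x = 0 then cyc n i else if x = 1 then tpTop n i else if x = 2 then singTop n i else i
  start := ⟨0, h⟩
  accept := {i | i.val = n - 1}

def V (n : ℕ) (h : 0 < n) : Language (Fin 4) := (Vdfa n h).accepts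

/-- 𝒱ₙ(d,c,b,a): d = cycle, c = transposition (n−2,n−1), b = (n−1 ↦ n−2), a = identity. -/
def VdcbaDfa (n : ℕ) (h : 0 < n) : DFA (Fin 4) (Fin n) where
  step := fun i x =>
    if x = 3 then cyc n i else if x = 2 then tpTop n i else if x = 1 then singTop n i else i
  start := ⟨0, h⟩
  accept := {i | i.val = n - 1}

def Vdcba (n : ℕ) (h : 0 < n) : Language (Fin 4) := (VdcbaDfa n h).accepts

/-- Direct product of two DFAs with a chosen set of final states. -/
def prodDFA {α σ₁ σ₂ : Type} (M : DFA α σ₁) (N : DFA α σ₂) (acc : Set (σ₁ × σ₂)) :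
    DFA α (σ₁ × σ₂) where
  step := fun p x => (M.step p.1 x, N.step p.2 x)
  start := (M.start, N.start)
  accept := acc


/-- Chinese-remainder style pairing k ↦ (k mod m, k mod n). -/
def toPair (m n : ℕ) (hm : 0 < m) (hn : 0 < n) (k : Fin (m * n)) : Fin m × Fin n :=
  (⟨k.val % m, Nat.mod_lt _ hm⟩, ⟨k.val % n, Nat.mod_lt _ hn⟩)

/-- Componentwise successor on the product of two cyclic automata. -/
def prodSucc (m n : ℕ) (p : Fin m × Fin n) : Fin m × Fin n := (cyc m p.1, cyc n p.2)

/-- One-letter subset transition of the reversed NFA of 𝒰ₙ(a,b,c). -/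
def rstep (n : ℕ) (h : 0 < n) (S : Set (Fin n)) (x : Fin 3) : Set (Fin n) :=
  {q | (Udfa n h).step q x ∈ S}

/-- Action of a word on subsets in the reversed NFA of 𝒰ₙ(a,b,c). -/
def rword (n : ℕ) (h : 0 < n) (S : Set (Fin n)) (w : List (Fin 3)) : Set (Fin n) :=
  w.foldl (rstep n h) S

end SCPaper
section Aux

variable {α : Type} {σ σ' : Type}

attribute [local instance] Classical.propDecidable

namespace SCPaper

/-- Reversal DFA via subset construction. -/
def revD (M : DFA α σ) : DFA α (Set σ) where
  step := fun S x => {q | M.step q x ∈ S}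
  start := M.accept
  accept := {S | M.start ∈ S}

lemma revD_evalFrom (M : DFA α σ) (S : Set σ) (w : List α) :
    (revD M).evalFrom S w = {q | M.evalFrom q w.reverse ∈ S} := by
  induction w generalizing S with
  | nil => simp [DFA.evalFrom]
  | cons x w ih =>
      show (revD M).evalFrom ((revD M).step S x) w = _
      rw [ih]
      ext q
      simp only [Set.mem_setOf_eq, revD, List.reverse_cons,
        DFA.evalFrom_append_singleton]

lemma revD_accepts (M : DFA α σ) : (revD M).accepts = rev M.accepts := by
  ext w
  show w ∈ (revD M).accepts ↔ w.reverse ∈ M.accepts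
  rw [DFA.mem_accepts, DFA.mem_accepts, DFA.eval, revD_evalFrom]
  rfl

lemma prod_evalFrom (M : DFA α σ) (N : DFA α σ') (acc : Set (σ × σ'))
    (p : σ × σ') (w : List α) :
    (prodDFA M N acc).evalFrom p w = (M.evalFrom p.1 w, N.evalFrom p.2 w) := by
  induction w generalizing p with
  | nil => rfl
  | cons x w ih => exact ih _

variable (M : DFA α σ) (N : DFA α σ')

/-- Goodness predicate: first set nonempty, second not everything. -/
def Good (p : Set σ × Set σ') : Prop := p.1.Nonempty ∧ p.2 ≠ Set.univ

/-- The full product automaton for `rev K \ rev L`. -/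
def fullP : DFA α (Set σ × Set σ') :=
  prodDFA (revD M) (revD N) {p | M.start ∈ p.1 ∧ N.start ∉ p.2}

noncomputable def collapse (p : Set σ × Set σ') : Option {p : Set σ × Set σ' // Good p} :=
  if h : Good p then some ⟨p, h⟩ else none

/-- The collapsed automaton. -/
noncomputable def collD : DFA α (Option {p : Set σ × Set σ' // Good p}) where
  step := fun s x => match s with
    | none => none
    | some q => collapse ((fullP M N).step q.1 x)
  start := collapse (fullP M N).start
  accept := {s | s.elim False (fun q => q.1 ∈ (fullP M N).accept)}

lemma bad_step (p : Set σ × Set σ') (x : α) (h : ¬ Good p) :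
    ¬ Good ((fullP M N).step p x) := by
  unfold Good at h ⊢
  push_neg at h ⊢
  intro h1
  rcases (Classical.em p.1.Nonempty) with hne | hne
  · -- then p.2 = univ
    have h2 := h hne
    show {q | N.step q x ∈ p.2} = Set.univ
    rw [h2]; ext q; simp
  · exfalso
    rw [Set.not_nonempty_iff_eq_empty] at hne
    rcases h1 with ⟨q, hq⟩
    have hq' : M.step q x ∈ p.1 := hq
    rw [hne] at hq'
    exact hq'

lemma bad_not_accept (p : Set σ × Set σ') (h : ¬ Good p) :
    p ∉ (fullP M N).accept := by
  unfold Good at h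
  push_neg at h
  intro hacc
  rcases (Classical.em p.1.Nonempty) with hne | hne
  · have h2 := h hne
    exact hacc.2 (h2 ▸ Set.mem_univ _)
  · rw [Set.not_nonempty_iff_eq_empty] at hne
    have := hacc.1
    rw [hne] at this
    exact this

lemma coll_step (p : Set σ × Set σ') (x : α) :
    (collD M N).step (collapse p) x = collapse ((fullP M N).step p x) := by
  unfold collapse
  by_cases h : Good p
  · rw [dif_pos h]; rfl
  · rw [dif_neg h]
    show none = _
    rw [dif_neg (bad_step M N p x h)]

lemma coll_evalFrom (p : Set σ × Set σ') (w : List α) :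
    (collD M N).evalFrom (collapse p) w = collapse ((fullP M N).evalFrom p w) := by
  induction w generalizing p with
  | nil => rfl
  | cons x w ih =>
      show (collD M N).evalFrom ((collD M N).step (collapse p) x) w = _
      rw [coll_step, ih]
      rfl

lemma coll_accept (p : Set σ × Set σ') :
    collapse p ∈ (collD M N).accept ↔ p ∈ (fullP M N).accept := by
  unfold collapse
  by_cases h : Good p
  · rw [dif_pos h]; rfl
  · rw [dif_neg h]
    simp only [collD, Set.mem_setOf_eq, Option.elim]
    exact iff_of_false (fun h' => h') (bad_not_accept M N p h)

lemma collD_accepts : (collD M N).accepts = (fullP M N).accepts := by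
  ext w
  rw [DFA.mem_accepts, DFA.mem_accepts]
  show (collD M N).evalFrom (collapse (fullP M N).start) w ∈ _ ↔ _
  rw [coll_evalFrom, coll_accept]
  rfl

lemma fullP_accepts : (fullP M N).accepts = ldiff (rev M.accepts) (rev N.accepts) := by
  ext w
  rw [DFA.mem_accepts]
  unfold fullP
  rw [DFA.eval, prod_evalFrom]
  show M.start ∈ _ ∧ N.start ∉ _ ↔ _
  constructor
  · intro ⟨h1, h2⟩
    constructor
    · rw [← revD_accepts]; exact h1
    · rw [← revD_accepts]; exact h2
  · intro ⟨h1, h2⟩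
    rw [← revD_accepts] at h1 h2
    exact ⟨h1, h2⟩

/-- If a language is accepted by a DFA on a fintype with at most `N` states,
its state complexity is at most `N`. -/
lemma sc_le_of_dfa {L : Language α} (τ : Type) [Fintype τ] (M : DFA α τ)
    (hM : M.accepts = L) {N : ℕ} (h : Fintype.card τ ≤ N) : sc L ≤ N := by
  have hne : Nonempty τ := ⟨M.start⟩
  let f : τ ↪ Fin N := (Fintype.equivFin τ).toEmbedding.trans (Fin.castLEEmb h)
  let g : Fin N → τ := Function.invFun f
  have hg : ∀ s, g (f s) = s := Function.leftInverse_invFun f.injective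
  let D : DFA α (Fin N) :=
    ⟨fun s x => f (M.step (g s) x), f M.start, {s | g s ∈ M.accept}⟩
  have hev : ∀ (w : List α) (s : τ), D.evalFrom (f s) w = f (M.evalFrom s w) := by
    intro w
    induction w with
    | nil => intro s; rfl
    | cons x w ih =>
        intro s
        show D.evalFrom (D.step (f s) x) w = _
        show D.evalFrom (f (M.step (g (f s)) x)) w = _
        rw [hg, ih]
        rfl
  have hacc : D.accepts = L := by
    rw [← hM]
    ext w
    rw [DFA.mem_accepts, DFA.mem_accepts, DFA.eval, DFA.eval]
    show D.evalFrom (f M.start) w ∈ _ ↔ _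
    rw [hev]
    show g (f _) ∈ M.accept ↔ _
    rw [hg]
  apply Nat.sInf_le
  exact ⟨D, hacc⟩

lemma card_nonempty_sets (k : ℕ) :
    Fintype.card {S : Set (Fin k) // S.Nonempty} = 2 ^ k - 1 := by
  have h1 : Fintype.card {S : Set (Fin k) // ¬ (S = ∅)} = 2 ^ k - 1 := by
    rw [Fintype.card_subtype_compl, Fintype.card_subtype_eq, Fintype.card_set,
      Fintype.card_fin]
  rw [← h1]
  apply Fintype.card_congr
  exact Equiv.subtypeEquivRight (fun S => Set.nonempty_iff_ne_empty)

lemma card_ne_univ_sets (k : ℕ) :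
    Fintype.card {S : Set (Fin k) // S ≠ Set.univ} = 2 ^ k - 1 := by
  show Fintype.card {S : Set (Fin k) // ¬ (S = Set.univ)} = 2 ^ k - 1
  rw [Fintype.card_subtype_compl, Fintype.card_subtype_eq, Fintype.card_set,
    Fintype.card_fin]

end SCPaper

end Aux

open SCPaper

open SCPaper

theorem diff_two_reversed_upper_bound {α : Type} (K L : Language α) (m n : ℕ)
    (hK : Regular K) (hL : Regular L) (hm : sc K = m) (hn : sc L = n) :
    sc (ldiff (rev K) (rev L)) ≤ (2 ^ m - 1) * (2 ^ n - 1) + 1 := by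
  classical
  have hmK : m ∈ complexitySet K := hm ▸ Nat.sInf_mem hK
  have hnL : n ∈ complexitySet L := hn ▸ Nat.sInf_mem hL
  obtain ⟨M, hM⟩ := hmK
  obtain ⟨N, hN⟩ := hnL
  have hacc : (collD M N).accepts = ldiff (rev K) (rev L) := by
    rw [collD_accepts, fullP_accepts, hM, hN]
  have hcard : Fintype.card (Option {p : Set (Fin m) × Set (Fin n) // Good p}) =
      (2 ^ m - 1) * (2 ^ n - 1) + 1 := by
    rw [Fintype.card_option]
    congr 1
    rw [Fintype.card_congr
      ((Equiv.subtypeEquivRight (fun p : Set (Fin m) × Set (Fin n) => Iff.rfl :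
          ∀ p : Set (Fin m) × Set (Fin n), Good p ↔ p.1.Nonempty ∧ p.2 ≠ Set.univ)).trans
        (Equiv.subtypeProdEquivProd (p := fun S : Set (Fin m) => S.Nonempty)
          (q := fun T : Set (Fin n) => T ≠ Set.univ))),
      Fintype.card_prod, card_nonempty_sets, card_ne_univ_sets]
  exact sc_le_of_dfa _ (collD M N) hacc (le_of_eq hcard)
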